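/- In any normed plane, c_R(‖·‖) + c_D(‖·‖) ≥ 1, where c_D(‖·‖) = inf{s(y,x) : x,y ∈ S, x ⊣_B y} and c_R(‖·‖) = sup_{x,y∈S} |s(x,y) − s(y,x)|. -/

import Mathlib

open Module

variable {V : Type*} [NormedAddCommGroup V] [NormedSpace ℝ V]

noncomputable def sine {V : Type*} [NormedAddCommGroup V] [NormedSpace ℝ V] (x y : V) : ℝ :=
  ⨅ t : ℝ, ‖x + t • y‖

def BOrth {V : Type*} [NormedAddCommGroup V] [NormedSpace ℝ V] (x y : V) : Prop :=
  ∀ t : ℝ, ‖x‖ ≤ ‖x + t • y‖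

noncomputable def cD (V : Type*) [NormedAddCommGroup V] [NormedSpace ℝ V] : ℝ :=
  sInf {r : ℝ | ∃ x y : V, ‖x‖ = 1 ∧ ‖y‖ = 1 ∧ BOrth x y ∧ r = sine y x}

noncomputable def cR (V : Type*) [NormedAddCommGroup V] [NormedSpace ℝ V] : ℝ :=
  sSup {r : ℝ | ∃ x y : V, ‖x‖ = 1 ∧ ‖y‖ = 1 ∧ r = |sine x y - sine y x|}

lemma sine_nonneg (x y : V) : 0 ≤ sine x y :=
  Real.iInf_nonneg fun _ => norm_nonneg _

lemma sine_le_norm (x y : V) : sine x y ≤ ‖x‖ := by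
  have h := ciInf_le (f := fun t : ℝ => ‖x + t • y‖)
    ⟨0, by rintro _ ⟨t, rfl⟩; positivity⟩ 0
  simpa [sine] using h

lemma sine_eq_one_of_BOrth {x y : V} (hx : ‖x‖ = 1) (h : BOrth x y) : sine x y = 1 := by
  refine le_antisymm (hx ▸ sine_le_norm x y) (le_ciInf fun t => ?_)
  simpa [hx] using h t

theorem cR_add_cD_ge_one (hV : finrank ℝ V = 2) : 1 ≤ cR V + cD V := by
  have hfd : FiniteDimensional ℝ V := FiniteDimensional.of_finrank_eq_succ hV
  have hnt : Nontrivial V := by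
    have : 0 < finrank ℝ V := by omega
    exact Module.nontrivial_of_finrank_pos this
  -- a unit vector
  obtain ⟨x0, hx0⟩ := exists_norm_eq V zero_le_one
  -- dual functional
  obtain ⟨g, hg1, hgx⟩ := exists_dual_vector ℝ x0 (by
    intro h; rw [h] at hx0; exact one_ne_zero hx0.symm)
  -- y in kernel of g
  have hker : ∃ y : V, g y = 0 ∧ y ≠ 0 := by
    have hrank : finrank ℝ (LinearMap.range (g : V →ₗ[ℝ] ℝ)) ≤ 1 := by
      simpa using Submodule.finrank_le (LinearMap.range (g : V →ₗ[ℝ] ℝ))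
    have hk : 0 < finrank ℝ (LinearMap.ker (g : V →ₗ[ℝ] ℝ)) := by
      have := LinearMap.finrank_range_add_finrank_ker (g : V →ₗ[ℝ] ℝ)
      omega
    have hk' : LinearMap.ker (g : V →ₗ[ℝ] ℝ) ≠ ⊥ := by
      intro hbot
      rw [hbot] at hk
      simp at hk
    obtain ⟨y, hy, hyne⟩ := Submodule.exists_mem_ne_zero_of_ne_bot hk'
    exact ⟨y, hy, hyne⟩
  obtain ⟨y0, hy0, hy0ne⟩ := hker
  set y : V := ‖y0‖⁻¹ • y0 with hy
  have hny : ‖y‖ = 1 := by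
    rw [hy, norm_smul, norm_inv, norm_norm, inv_mul_cancel₀ (norm_ne_zero_iff.mpr hy0ne)]
  have hBO : BOrth x0 y := by
    intro t
    have : g (x0 + t • y) = 1 := by
      simp [hy, map_add, map_smul, hy0, hgx, hx0]
    calc ‖x0‖ = 1 := hx0
      _ = ‖g (x0 + t • y)‖ := by rw [this]; simp
      _ ≤ ‖g‖ * ‖x0 + t • y‖ := g.le_opNorm _
      _ = ‖x0 + t • y‖ := by rw [hg1, one_mul]
  -- cR set properties
  set R := {r : ℝ | ∃ x y : V, ‖x‖ = 1 ∧ ‖y‖ = 1 ∧ r = |sine x y - sine y x|} with hR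
  have hRbdd : BddAbove R := by
    refine ⟨1, ?_⟩
    rintro r ⟨a, b, ha, hb, rfl⟩
    have h1 := sine_nonneg a b
    have h2 := sine_nonneg b a
    have h3 := sine_le_norm a b
    have h4 := sine_le_norm b a
    rw [ha] at h3; rw [hb] at h4
    rw [abs_sub_le_iff]; constructor <;> linarith
  -- cD set nonempty and lower bounded by 1 - cR
  have hcD : 1 - cR V ≤ cD V := by
    refine le_csInf ⟨sine y x0, x0, y, hx0, hny, hBO, rfl⟩ ?_
    rintro r ⟨a, b, ha, hb, hab, rfl⟩
    have hs1 : sine a b = 1 := sine_eq_one_of_BOrth ha hab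
    have hmem : 1 - sine b a ∈ R := by
      refine ⟨a, b, ha, hb, ?_⟩
      rw [hs1, abs_of_nonneg (by linarith [hb ▸ sine_le_norm b a])]
    have hle : 1 - sine b a ≤ cR V := le_csSup hRbdd hmem
    linarith
  linarith
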